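/- Let H be a complex Hilbert space, ι a countable index type, and ψ : ι → H a total Bessel sequence with bounded analysis operator C : H → ℓ²(ι), (C f)_k = ⟨ψ_k, f⟩, synthesis operator D = C*, and Gram operator G = C ∘ D. Then for every f in Ran(D) there exists a unique c in the closure of Ran(C) such that G c = C f, and for this c the family (c_k·ψ_k)_k sums in norm to f: f = ∑_k c_k ψ_k. -/

import Mathlib

open scoped ComplexInnerProductSpace

/-- Let `ψ : ι → H` be a total Bessel sequence with analysis operator
`C`, synthesis operator `D = C*` and Gram operator `G = C D`.  Then for every
`f ∈ Ran(D)` there is a unique `c ∈ cl(Ran C)` with `G c = C f`, and for this `c` the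
family `(cₖ ψₖ)` sums in norm to `f`. -/
theorem reconstruction_on_range_of_synthesis
    {H : Type*} [NormedAddCommGroup H] [InnerProductSpace ℂ H] [CompleteSpace H]
    {ι : Type*} [Countable ι] (ψ : ι → H) (M : ℝ)
    (hbessel : ∀ f : H, Summable (fun k => ‖⟪ψ k, f⟫‖ ^ 2) ∧
      ∑' k, ‖⟪ψ k, f⟫‖ ^ 2 ≤ M * ‖f‖ ^ 2)
    (htotal : (Submodule.span ℂ (Set.range ψ)).topologicalClosure = ⊤)
    (C : H →L[ℂ] lp (fun _ : ι => ℂ) 2)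
    (hC : ∀ (f : H) (k : ι), C f k = ⟪ψ k, f⟫) :
    ∀ f ∈ Set.range ⇑(ContinuousLinearMap.adjoint C),
      (∃! c : lp (fun _ : ι => ℂ) 2,
        c ∈ closure (Set.range ⇑C) ∧
        (C.comp (ContinuousLinearMap.adjoint C)) c = C f) ∧
      ∀ c : lp (fun _ : ι => ℂ) 2, c ∈ closure (Set.range ⇑C) →
        (C.comp (ContinuousLinearMap.adjoint C)) c = C f →
        HasSum (fun k => c k • ψ k) f := by
  classical
  set D := ContinuousLinearMap.adjoint C with hD
  -- C is injective
  have horth : (Submodule.span ℂ (Set.range ψ))ᗮ = ⊥ :=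
    Submodule.topologicalClosure_eq_top_iff.mp htotal
  have hCinj : ∀ g : H, C g = 0 → g = 0 := by
    intro g hg
    have hmem : g ∈ (Submodule.span ℂ (Set.range ψ))ᗮ := by
      rw [Submodule.mem_orthogonal]
      intro u hu
      refine Submodule.span_induction (fun x hx => ?_) (by simp)
        (fun x y _ _ hx hy => by rw [inner_add_left, hx, hy, add_zero])
        (fun r x _ hx => by rw [inner_smul_left, hx, mul_zero]) hu
      obtain ⟨k, rfl⟩ := hx
      have : C g k = 0 := by rw [hg]; rfl
      rwa [hC] at this
    rw [horth, Submodule.mem_bot] at hmem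
    exact hmem
  -- the closed subspace K = closure of the range of C
  set K : Submodule ℂ (lp (fun _ : ι => ℂ) 2) := (LinearMap.range (C : H →ₗ[ℂ] lp (fun _ : ι => ℂ) 2)).topologicalClosure with hK
  have hKset : closure (Set.range ⇑C) = (K : Set (lp (fun _ : ι => ℂ) 2)) := by
    rw [hK, Submodule.topologicalClosure_coe, LinearMap.coe_range, ContinuousLinearMap.coe_coe]
  haveI : CompleteSpace K := (LinearMap.range (C : H →ₗ[ℂ] lp (fun _ : ι => ℂ) 2)).isClosed_topologicalClosure.completeSpace_coe
  -- D kills Kᗮ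
  have hDorth : ∀ z : lp (fun _ : ι => ℂ) 2, z ∈ Kᗮ → D z = 0 := by
    intro z hz
    have h1 : C (D z) ∈ K := (LinearMap.range (C : H →ₗ[ℂ] lp (fun _ : ι => ℂ) 2)).le_topologicalClosure (LinearMap.mem_range_self _ _)
    have h2 : ⟪C (D z), z⟫ = 0 := (Submodule.mem_orthogonal K z).mp hz _ h1
    have h3 : ⟪D z, D z⟫ = (0 : ℂ) := by
      rw [hD, ContinuousLinearMap.adjoint_inner_left, ← inner_conj_symm, h2, map_zero]
    exact inner_self_eq_zero.mp h3
  -- anything in K killed by D is zero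
  have hKperp : Kᗮ = (LinearMap.range (C : H →ₗ[ℂ] lp (fun _ : ι => ℂ) 2) : Submodule ℂ (lp (fun _ : ι => ℂ) 2))ᗮ := by
    rw [hK, ← Submodule.orthogonal_orthogonal_eq_closure,
      Submodule.triorthogonal_eq_orthogonal]
  have hKinj : ∀ w : lp (fun _ : ι => ℂ) 2, w ∈ K → D w = 0 → w = 0 := by
    intro w hw hDw
    have hworth : w ∈ Kᗮ := by
      rw [hKperp, Submodule.mem_orthogonal]
      rintro u ⟨g, rfl⟩
      rw [ContinuousLinearMap.coe_coe, ← ContinuousLinearMap.adjoint_inner_right, ← hD, hDw, inner_zero_right]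
    exact inner_self_eq_zero.mp ((Submodule.mem_orthogonal K w).mp hworth w hw)
  -- D maps single sequences to the frame vectors
  have hDe : ∀ (k : ι) (z : ℂ), D (lp.single 2 k z) = z • ψ k := by
    intro k z
    refine ext_inner_left ℂ fun v => ?_
    rw [hD, ContinuousLinearMap.adjoint_inner_right, lp.inner_single_right, hC,
      inner_smul_right, RCLike.inner_apply, ← inner_conj_symm v (ψ k)]
  -- main argument
  rintro f ⟨a, rfl⟩
  obtain ⟨y, hyK, z, hzK, hazy⟩ := K.exists_add_mem_mem_orthogonal a
  have hDa : D a = D y := by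
    rw [hazy, map_add, hDorth z hzK, add_zero]
  constructor
  · refine ⟨y, ⟨by rw [hKset]; exact hyK, by rw [ContinuousLinearMap.comp_apply, hDa]⟩, ?_⟩
    rintro c' ⟨hc'K, hc'⟩
    rw [hKset] at hc'K
    rw [ContinuousLinearMap.comp_apply] at hc'
    have h0 : C (D (c' - y)) = 0 := by
      rw [map_sub, map_sub, hc', hDa, sub_self]
    have h1 : D (c' - y) = 0 := hCinj _ h0
    have h2 : c' - y = 0 := hKinj _ (K.sub_mem hc'K hyK) h1
    exact sub_eq_zero.mp h2
  · intro c hcK hGc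
    rw [ContinuousLinearMap.comp_apply] at hGc
    have hDc : D c = D a := by
      have h0 : C (D c - D a) = 0 := by rw [map_sub, hGc, sub_self]
      have := hCinj _ h0
      exact sub_eq_zero.mp this
    have hs : HasSum (fun k : ι => lp.single 2 k (c k)) c :=
      lp.hasSum_single (by norm_num) c
    have hs2 := D.hasSum hs
    simp only [hDe] at hs2
    rwa [hDc] at hs2
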